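/- Let G be a moral DAG (a DAG with no v-structures) with covered edge x→y, and let G' be the DAG obtained from G by reversing x→y to y→x. Suppose b is a vertex with b ∉ {x,y} such that b is a direct child of y in G (y→b is an edge of G and there is no directed path in G from y to b of length at least 2) and x→b is an edge of G. Then y→b is a covered edge of G if and only if x→b is a covered edge of G'. -/
import Mathlib


/-- A directed graph (given by its edge relation) is a DAG if it has no directed cycles. -/
def IsDAG {V : Type*} (E : V → V → Prop) : Prop :=
  ∀ v : V, ¬ Relation.TransGen E v v

/-- The set of parents of `v` in the directed graph `E`. -/
def parents {V : Type*} (E : V → V → Prop) (v : V) : Set V := {u | E u v}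

/-- An arc `x → y` of `E` is a covered edge if `Pa(x) = Pa(y) \ {x}`. -/
def CoveredEdge {V : Type*} (E : V → V → Prop) (x y : V) : Prop :=
  E x y ∧ parents E x = parents E y \ {x}

/-- The set of covered edges of `E`, as ordered pairs. -/
def coveredEdges {V : Type*} (E : V → V → Prop) : Set (V × V) :=
  {p | CoveredEdge E p.1 p.2}

/-- The skeleton (undirected adjacency) of a directed graph. -/
def Skel {V : Type*} (E : V → V → Prop) (u v : V) : Prop := E u v ∨ E v u

/-- `(u, v, w)` is a v-structure: `u → v ← w` with `u ≠ w` non-adjacent. -/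
def VStruct {V : Type*} (E : V → V → Prop) (u v w : V) : Prop :=
  u ≠ w ∧ E u v ∧ E w v ∧ ¬ Skel E u w

/-- Two directed graphs are Markov equivalent: same skeleton and same v-structures. -/
def MarkovEquiv {V : Type*} (E E' : V → V → Prop) : Prop :=
  (∀ u v, Skel E u v ↔ Skel E' u v) ∧ (∀ u v w, VStruct E u v w ↔ VStruct E' u v w)

/-- Minimum vertex cover number of a set of (directed) edges. -/
noncomputable def mvc {V : Type*} [Fintype V] (F : Set (V × V)) : ℕ :=
  sInf {n | ∃ S : Finset V, (∀ p ∈ F, p.1 ∈ S ∨ p.2 ∈ S) ∧ S.card = n}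

/-- The graph obtained from `E` by reversing the arc `x → y` to `y → x`. -/
def reverseEdge {V : Type*} (E : V → V → Prop) (x y : V) : V → V → Prop :=
  fun u v => (E u v ∧ ¬(u = x ∧ v = y)) ∨ (u = y ∧ v = x)

/-- A moral DAG is a DAG with no v-structures. -/
def Moral {V : Type*} (E : V → V → Prop) : Prop := ∀ u v w, ¬ VStruct E u v w

/-- `w` is a direct child of `v`: `v → w` is an arc and there is no directed
path from `v` to `w` of length at least 2 (i.e. through an intermediate vertex). -/
def DirectChild {V : Type*} (E : V → V → Prop) (v w : V) : Prop :=
  E v w ∧ ∀ z : V, ¬ (Relation.TransGen E v z ∧ Relation.TransGen E z w)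


/-- In a moral DAG with covered edge `x → y`, if `b ∉ {x, y}` is a direct child of `y`
and `x → b` is an arc, then `y → b` is a covered edge of the DAG if and only if `x → b`
is a covered edge of the DAG obtained by reversing `x → y`. -/
theorem coveredEdge_reverse_child_case
    {V : Type*} (E : V → V → Prop) (x y b : V)
    (hE : IsDAG E) (hm : Moral E) (hxy : CoveredEdge E x y)
    (hbx : b ≠ x) (hby : b ≠ y) (hchild : DirectChild E y b) (hxb : E x b) :
    CoveredEdge E y b ↔ CoveredEdge (reverseEdge E x y) x b := by
  obtain ⟨hExy, hpar⟩ := hxy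
  have hEyb : E y b := hchild.1
  have hnoloop : ∀ u, ¬ E u u := fun u h => hE u (.single h)
  have hxney : x ≠ y := fun h => hnoloop x (h ▸ hExy)
  constructor
  · rintro ⟨-, hp⟩
    refine ⟨Or.inl ⟨hxb, fun hc => hby hc.2⟩, Set.ext fun u => ?_⟩
    have h1 := Set.ext_iff.mp hpar u
    have h2 := Set.ext_iff.mp hp u
    simp only [parents, reverseEdge, Set.mem_setOf_eq, Set.mem_diff,
      Set.mem_singleton_iff] at h1 h2 ⊢
    constructor
    · rintro (⟨hux, -⟩ | ⟨rfl, -⟩)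
      · exact ⟨Or.inl ⟨(h2.mp (h1.mp hux).1).1, fun hc => hby hc.2⟩,
          fun hc => hnoloop x (hc ▸ hux)⟩
      · exact ⟨Or.inl ⟨hEyb, fun hc => hxney hc.1.symm⟩, fun hc => hxney hc.symm⟩
    · rintro ⟨hub' , hux⟩
      have hub : E u b := by
        rcases hub' with ⟨h, -⟩ | ⟨-, h⟩
        · exact h
        · exact absurd h hbx
      by_cases huy : u = y
      · exact Or.inr ⟨huy, trivial⟩
      · exact Or.inl ⟨h1.mpr ⟨h2.mpr ⟨hub, huy⟩, hux⟩, fun hc => hxney hc.2⟩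
  · rintro ⟨-, hp⟩
    refine ⟨hEyb, Set.ext fun u => ?_⟩
    have h1 := Set.ext_iff.mp hpar u
    have h2 := Set.ext_iff.mp hp u
    simp only [parents, reverseEdge, Set.mem_setOf_eq, Set.mem_diff,
      Set.mem_singleton_iff] at h1 h2 ⊢
    constructor
    · intro huy
      have hne : u ≠ y := fun hc => hnoloop y (hc ▸ huy)
      by_cases hux : u = x
      · exact ⟨hux ▸ hxb, hne⟩
      · have := h2.mp (Or.inl ⟨h1.mpr ⟨huy, hux⟩, fun hc => hxney hc.2⟩)
        rcases this.1 with ⟨h, -⟩ | ⟨h, -⟩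
        · exact ⟨h, hne⟩
        · exact absurd h hne
    · rintro ⟨hub, huy⟩
      by_cases hux : u = x
      · exact hux ▸ hExy
      · have := h2.mpr ⟨Or.inl ⟨hub, fun hc => hby hc.2⟩, hux⟩
        rcases this with ⟨h, -⟩ | ⟨h, -⟩
        · exact (h1.mp h).1
        · exact absurd h huy
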